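/- arXiv:math/0207245 — 2 statements merged into one kernel-verified Lean document; each statement's English description precedes it below -/
import Mathlib

section
/- Let q = p^t be a prime power, G a group of order q^2 generated by two subgroups E and E' each of order q with E ∩ E' = {1}. Suppose a cyclic group C of order q−1 acts on G by automorphisms, stabilizing E and E', such that the induced action on E \ {1} and on E' \ {1} is simply transitive. Then G is the internal direct product of E and E' (i.e., every element of E commutes with every element of E' and G = E × E'). -/
private lemma stmt0_mul_inj {G : Type*} [Group G] (A B : Subgroup G) (h : A ⊓ B = ⊥) :
    Function.Injective (fun p : A × B => (p.1 : G) * p.2) := by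
  rintro ⟨a, b⟩ ⟨a', b'⟩ hab
  simp only at hab
  have key : ((a' : G)⁻¹ * a) = (b' : G) * (b : G)⁻¹ := by
    have h2 : (a':G)⁻¹ * ((a:G) * b) * (b:G)⁻¹ = (a':G)⁻¹ * ((a':G) * (b':G)) * (b:G)⁻¹ := by
      rw [hab]
    group at h2
    simpa [mul_assoc] using h2
  have hmem : (a' : G)⁻¹ * a ∈ A ⊓ B :=
    ⟨A.mul_mem (A.inv_mem a'.2) a.2, key ▸ B.mul_mem b'.2 (B.inv_mem b.2)⟩
  rw [h, Subgroup.mem_bot] at hmem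
  have ha : (a' : G) = a := by
    have := inv_mul_eq_one.mp hmem; exact this
  have hb : (b' : G) = b := by
    have : (b' : G) * (b : G)⁻¹ = 1 := key ▸ hmem
    exact mul_inv_eq_one.mp this
  exact Prod.ext (Subtype.ext ha.symm) (Subtype.ext hb.symm)

/-- The direct-product lemma: a group of order `q²` generated by two disjoint
subgroups of order `q`, with a cyclic group of order `q - 1` acting by automorphisms
stabilizing both and acting simply transitively on their nontrivial elements,
is the internal direct product of the two subgroups. -/
theorem stmt_0 (p t q : ℕ) (hp : p.Prime) (ht : 1 ≤ t) (hq : q = p ^ t)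
    (G : Type*) [Group G] [Finite G] (hG : Nat.card G = q ^ 2)
    (E E' : Subgroup G) (hE : Nat.card E = q) (hE' : Nat.card E' = q)
    (hdisj : E ⊓ E' = ⊥) (hgen : E ⊔ E' = ⊤)
    (C : Type*) [Group C] [IsCyclic C] (hC : Nat.card C = q - 1)
    (φ : C →* MulAut G)
    (hstabE : ∀ c : C, ∀ x ∈ E, φ c x ∈ E)
    (hstabE' : ∀ c : C, ∀ x ∈ E', φ c x ∈ E')
    (htransE : ∀ x ∈ E, ∀ y ∈ E, x ≠ 1 → y ≠ 1 → ∃! c : C, φ c x = y)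
    (htransE' : ∀ x ∈ E', ∀ y ∈ E', x ≠ 1 → y ≠ 1 → ∃! c : C, φ c x = y) :
    (∀ x ∈ E, ∀ y ∈ E', Commute x y) ∧ Nonempty (G ≃* E × E') := by
  haveI : Fact p.Prime := ⟨hp⟩
  -- basic numerology
  have hq2 : 2 ≤ q := by
    subst hq
    calc 2 = 2 ^ 1 := rfl
    _ ≤ p ^ t := Nat.pow_le_pow_left hp.two_le t |>.trans' (Nat.pow_le_pow_right (by norm_num) ht)
  have hqpos : 0 < q := by omega
  -- the multiplication map E × E' → G is bijective
  have hinj : Function.Injective (fun z : E × E' => (z.1 : G) * z.2) := stmt0_mul_inj E E' hdisj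
  have hcards : Nat.card (E × E') = Nat.card G := by
    rw [Nat.card_prod, hE, hE', hG, sq]
  have hbij : Function.Bijective (fun z : E × E' => (z.1 : G) * z.2) :=
    (Nat.bijective_iff_injective_and_card _).mpr ⟨hinj, hcards⟩
  -- group-action facts
  have hone : ∀ x : G, φ 1 x = x := by
    intro x; rw [map_one]; rfl
  have hmulap : ∀ (c d : C) (x : G), φ (c * d) x = φ c (φ d x) := by
    intro c d x; rw [map_mul]; rfl
  have hfreeE : ∀ x ∈ E, x ≠ 1 → ∀ c : C, φ c x = x → c = 1 := by
    intro x hx hx1 c hcx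
    obtain ⟨c₀, _, huniq⟩ := htransE x hx x hx hx1 hx1
    rw [huniq c hcx, huniq 1 (hone x)]
  -- the center is invariant under the action
  have hcentinv : ∀ (c : C) (g : G), g ∈ Subgroup.center G → φ c g ∈ Subgroup.center G := by
    intro c g hg
    rw [Subgroup.mem_center_iff] at hg ⊢
    intro h
    have hh : h = φ c ((φ c)⁻¹ h) := (MulAut.apply_inv_self G (φ c) h).symm
    calc h * φ c g = φ c ((φ c)⁻¹ h) * φ c g := by rw [← hh]
    _ = φ c ((φ c)⁻¹ h * g) := by rw [map_mul]
    _ = φ c (g * (φ c)⁻¹ h) := by rw [hg]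
    _ = φ c g * φ c ((φ c)⁻¹ h) := by rw [map_mul]
    _ = φ c g * h := by rw [← hh]
  -- E is abelian
  have hEab : ∀ a ∈ E, ∀ b ∈ E, Commute a b := by
    have hpE : IsPGroup p E := IsPGroup.of_card (by rw [hE, hq])
    have : Nontrivial E := Finite.one_lt_card_iff_nontrivial.mp (by omega)
    haveI := hpE.center_nontrivial
    obtain ⟨z, hzne⟩ := exists_ne (1 : Subgroup.center E)
    have hz : (z : E) ∈ Subgroup.center E := z.2
    have hzE : ((z : E) : G) ∈ E := (z : E).2
    have hz1 : ((z : E) : G) ≠ 1 := by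
      intro h
      apply hzne
      ext
      exact h
    intro a ha b hb
    rcases eq_or_ne a 1 with rfl | ha1
    · exact Commute.one_left b
    obtain ⟨c, hc, -⟩ := htransE _ hzE a ha hz1 ha1
    have hwb : (φ c)⁻¹ b ∈ E := by
      have := hstabE c⁻¹ b hb
      rwa [map_inv] at this
    have hcomm : ((z : E) : G) * ((φ c)⁻¹ b) = ((φ c)⁻¹ b) * ((z : E) : G) := by
      have := Subgroup.mem_center_iff.mp hz ⟨(φ c)⁻¹ b, hwb⟩
      exact congrArg Subtype.val this |>.symm
    have hb' : φ c ((φ c)⁻¹ b) = b := MulAut.apply_inv_self G (φ c) b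
    show a * b = b * a
    calc a * b = φ c ((z : E) : G) * φ c ((φ c)⁻¹ b) := by rw [hc, hb']
    _ = φ c (((z : E) : G) * ((φ c)⁻¹ b)) := by rw [map_mul]
    _ = φ c (((φ c)⁻¹ b) * ((z : E) : G)) := by rw [hcomm]
    _ = φ c ((φ c)⁻¹ b) * φ c ((z : E) : G) := by rw [map_mul]
    _ = b * a := by rw [hc, hb']
  -- key step: some nontrivial element of E or E' is central
  obtain ⟨e₀, he₀mem, he₀ne, he₀cent⟩ :
      ∃ z : G, (z ∈ E ∨ z ∈ E') ∧ z ≠ 1 ∧ z ∈ Subgroup.center G := by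
    by_contra hcon
    push_neg at hcon
    -- hcon : ∀ z, (z ∈ E ∨ z ∈ E') → z ≠ 1 → z ∉ center G
    have : Nontrivial G := Finite.one_lt_card_iff_nontrivial.mp (by rw [hG]; nlinarith)
    have hpG : IsPGroup p G := IsPGroup.of_card (by rw [hG, hq, ← pow_mul])
    haveI := hpG.center_nontrivial
    obtain ⟨z, hzne⟩ := exists_ne (1 : Subgroup.center G)
    have hzcent : (z : G) ∈ Subgroup.center G := z.2
    have hz1 : (z : G) ≠ 1 := fun h => hzne (Subtype.ext h)
    obtain ⟨⟨x, y⟩, hxy⟩ := hbij.2 (z : G)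
    simp only at hxy
    have hx1 : (x : G) ≠ 1 := by
      rintro hx0
      apply hcon (z : G) (Or.inr (by rw [← hxy, hx0, one_mul]; exact y.2)) hz1 hzcent
    have hy1 : (y : G) ≠ 1 := by
      rintro hy0
      apply hcon (z : G) (Or.inl (by rw [← hxy, hy0, mul_one]; exact x.2)) hz1 hzcent
    have hCfin : Finite C := Nat.finite_of_card_ne_zero (by omega)
    -- the orbit map of z is injective
    have horb : Function.Injective (fun c : C => φ c (z : G)) := by
      intro c c' hcc
      simp only at hcc
      have h1 : φ (c'⁻¹ * c) (z : G) = (z : G) := by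
        rw [hmulap, hcc, ← hmulap, inv_mul_cancel, hone]
      set d := c'⁻¹ * c with hd
      have h2 : φ d (x : G) * φ d (y : G) = (x : G) * (y : G) := by
        rw [← map_mul, hxy, h1]
      have h3 : (⟨⟨φ d (x : G), hstabE d x x.2⟩, ⟨φ d (y : G), hstabE' d y y.2⟩⟩ : E × E')
          = (⟨x, y⟩ : E × E') := hinj h2
      have h4 : φ d (x : G) = (x : G) := congrArg (fun w : E × E' => ((w.1 : G))) h3
      have h5 : d = 1 := hfreeE x x.2 hx1 d h4
      have : c'⁻¹ * c = 1 := h5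
      exact (inv_mul_eq_one.mp this).symm ▸ rfl
    -- lower bound on the center's cardinality
    have hΘinj : Function.Injective
        (fun o : Option C => (Option.elim o (1 : Subgroup.center G)
          (fun c => ⟨φ c (z : G), hcentinv c (z : G) hzcent⟩))) := by
      rintro (_ | c) (_ | c') h
      · rfl
      · exfalso
        have : (1 : G) = φ c' (z : G) := congrArg Subtype.val h
        exact hz1 ((φ c').injective (by rw [← this, map_one]))
      · exfalso
        have : φ c (z : G) = (1 : G) := congrArg Subtype.val h
        exact hz1 ((φ c).injective (by rw [this, map_one]))
      · have : φ c (z : G) = φ c' (z : G) := congrArg Subtype.val h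
        rw [horb this]
    have hlow : q ≤ Nat.card (Subgroup.center G) := by
      have := Nat.card_le_card_of_injective _ hΘinj
      rwa [Finite.card_option, hC, Nat.sub_add_cancel (by omega)] at this
    -- upper bound
    have hdisjZ : Subgroup.center G ⊓ E = ⊥ := by
      rw [Subgroup.eq_bot_iff_forall]
      rintro w ⟨hw1, hw2⟩
      by_contra hw
      exact hcon w (Or.inl hw2) hw hw1
    have hZinj := stmt0_mul_inj (Subgroup.center G) E hdisjZ
    have hup : Nat.card (Subgroup.center G) * q ≤ q ^ 2 := by
      have := Nat.card_le_card_of_injective _ hZinj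
      rwa [Nat.card_prod, hE, hG] at this
    have hZcard : Nat.card (Subgroup.center G) = q := by
      have : Nat.card (Subgroup.center G) ≤ q := by nlinarith
      omega
    have hZbij : Function.Bijective
        (fun w : (Subgroup.center G) × E => (w.1 : G) * w.2) :=
      (Nat.bijective_iff_injective_and_card _).mpr
        ⟨hZinj, by rw [Nat.card_prod, hE, hG, hZcard, sq]⟩
    -- hence every element of E is central
    have : Nontrivial E := Finite.one_lt_card_iff_nontrivial.mp (by omega)
    obtain ⟨a, ha⟩ := exists_ne (1 : E)
    have haE : (a : G) ∈ E := a.2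
    have ha1 : (a : G) ≠ 1 := fun h => ha (Subtype.ext h)
    apply hcon (a : G) (Or.inl haE) ha1
    rw [Subgroup.mem_center_iff]
    intro g
    obtain ⟨⟨w, e⟩, hwe⟩ := hZbij.2 g
    simp only at hwe
    have hwc : ∀ u : G, u * (w : G) = (w : G) * u := Subgroup.mem_center_iff.mp w.2
    have hea : (e : G) * a = (a : G) * e := hEab e e.2 a haE
    calc g * a = (w : G) * e * a := by rw [hwe]
    _ = (w : G) * ((a : G) * e) := by rw [mul_assoc, hea]
    _ = (a : G) * w * e := by rw [← mul_assoc, hwc]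
    _ = (a : G) * g := by rw [mul_assoc, hwe]
  -- spread centrality from e₀ by transitivity
  have hcentral : (∀ x ∈ E, x ∈ Subgroup.center G) ∨ (∀ y ∈ E', y ∈ Subgroup.center G) := by
    rcases he₀mem with h | h
    · left
      intro x hx
      rcases eq_or_ne x 1 with rfl | hx1
      · exact Subgroup.one_mem _
      obtain ⟨c, hc, -⟩ := htransE e₀ h x hx he₀ne hx1
      rw [← hc]
      exact hcentinv c e₀ he₀cent
    · right
      intro x hx
      rcases eq_or_ne x 1 with rfl | hx1
      · exact Subgroup.one_mem _
      obtain ⟨c, hc, -⟩ := htransE' e₀ h x hx he₀ne hx1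
      rw [← hc]
      exact hcentinv c e₀ he₀cent
  have hcomm : ∀ x ∈ E, ∀ y ∈ E', Commute x y := by
    intro x hx y hy
    rcases hcentral with h | h
    · exact (Subgroup.mem_center_iff.mp (h x hx) y).symm
    · exact Subgroup.mem_center_iff.mp (h y hy) x
  refine ⟨hcomm, ?_⟩
  let f : E × E' →* G := MonoidHom.noncommCoprod E.subtype E'.subtype
    (fun a b => hcomm a a.2 b b.2)
  have hfbij : Function.Bijective f := hbij
  exact ⟨(MulEquiv.ofBijective f hfbij).symm⟩
end

section
/- Under the hypotheses of the direct-product lemma, the center of G contains no nontrivial fixed point of the C-action: if z ∈ Z(G) is fixed by some nontrivial element of C, then z = 1. -/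
/-- Under the hypotheses of the direct-product lemma, no nontrivial central element
is fixed by a nontrivial element of the cyclic group acting. -/
theorem stmt_1 (p t q : ℕ) (hp : p.Prime) (ht : 1 ≤ t) (hq : q = p ^ t)
    (G : Type*) [Group G] [Finite G] (hG : Nat.card G = q ^ 2)
    (E E' : Subgroup G) (hE : Nat.card E = q) (hE' : Nat.card E' = q)
    (hdisj : E ⊓ E' = ⊥) (hgen : E ⊔ E' = ⊤)
    (hprod : ∀ z : G, ∃! w : E × E', z = (w.1 : G) * (w.2 : G))
    (C : Type*) [Group C] [IsCyclic C] (hC : Nat.card C = q - 1)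
    (φ : C →* MulAut G)
    (hstabE : ∀ c : C, ∀ x ∈ E, φ c x ∈ E)
    (hstabE' : ∀ c : C, ∀ x ∈ E', φ c x ∈ E')
    (htransE : ∀ x ∈ E, ∀ y ∈ E, x ≠ 1 → y ≠ 1 → ∃! c : C, φ c x = y)
    (htransE' : ∀ x ∈ E', ∀ y ∈ E', x ≠ 1 → y ≠ 1 → ∃! c : C, φ c x = y) :
    ∀ z ∈ Subgroup.center G, ∀ c : C, c ≠ 1 → φ c z = z → z = 1 := by
  intro z _hz c hc hfix
  obtain ⟨⟨a, b⟩, hab, huniq⟩ := hprod z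
  have ha' : φ c (a : G) ∈ E := hstabE c a a.2
  have hb' : φ c (b : G) ∈ E' := hstabE' c b b.2
  have h2 : z = ((⟨φ c (a : G), ha'⟩ : E) : G) * ((⟨φ c (b : G), hb'⟩ : E') : G) := by
    have : φ c z = φ c (a : G) * φ c (b : G) := by rw [hab, map_mul]
    simpa [hfix] using this
  have hpair := huniq ⟨⟨φ c (a : G), ha'⟩, ⟨φ c (b : G), hb'⟩⟩ h2
  have hfa : φ c (a : G) = (a : G) := congrArg (fun w => ((w.1 : E) : G)) hpair
  have hfb : φ c (b : G) = (b : G) := congrArg (fun w => ((w.2 : E') : G)) hpair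
  have ha1 : (a : G) = 1 := by
    by_contra hne
    obtain ⟨c', _, huc⟩ := htransE (a : G) a.2 (a : G) a.2 hne hne
    have h1 : (1 : C) = c' := huc 1 (by simp)
    have hcc : c = c' := huc c hfa
    exact hc (hcc.trans h1.symm)
  have hb1 : (b : G) = 1 := by
    by_contra hne
    obtain ⟨c', _, huc⟩ := htransE' (b : G) b.2 (b : G) b.2 hne hne
    have h1 : (1 : C) = c' := huc 1 (by simp)
    have hcc : c = c' := huc c hfb
    exact hc (hcc.trans h1.symm)
  rw [hab, ha1, hb1, one_mul]
end
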